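/- Let λ, μ, A, B be real numbers and ξ¹, ξ² ∈ ℝ³, set ξ^P = ξ¹ + ξ², and let H(p¹, p²) be the S–S interaction symbol scalar. Let ξ^V ∈ ℝ³ be a unit vector with ξ^V·ξ¹ = 0 and ξ^V·ξ² = 0. Then H(ξ^V, ξ^V) = (λ + B)·(ξ¹·ξ²)·|ξ^P|² + (2μ + A/2)·(ξ¹·ξ^P)·(ξ²·ξ^P). (The P-wave output of the interaction of two S waves both polarized perpendicular to the interaction plane; it is generically nonvanishing exactly when λ + B ≠ 0 or 2μ + A/2 ≠ 0.) -/
import Mathlib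


/-- Euclidean dot product on ℝ³. -/
def dot (x y : Fin 3 → ℝ) : ℝ := ∑ i, x i * y i

/-- The S–S interaction symbol scalar H(p¹, p²) for two S waves with covectors
ξ¹, ξ² and polarizations p¹, p². -/
noncomputable def HSS (lam mu A B : ℝ) (ξ1 ξ2 p1 p2 : Fin 3 → ℝ) : ℝ :=
  lam * dot p1 p2 * dot ξ1 ξ2 * dot (ξ1 + ξ2) (ξ1 + ξ2)
    + mu * (dot p1 (ξ1 + ξ2) * dot ξ1 ξ2 + dot ξ1 (ξ1 + ξ2) * dot p1 ξ2)
        * dot p2 (ξ1 + ξ2)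
    + mu * dot p1 p2 * dot ξ1 (ξ1 + ξ2) * dot ξ2 (ξ1 + ξ2)
    + mu * (dot p2 (ξ1 + ξ2) * dot ξ2 ξ1 + dot ξ2 (ξ1 + ξ2) * dot p2 ξ1)
        * dot p1 (ξ1 + ξ2)
    + mu * dot p1 p2 * dot ξ2 (ξ1 + ξ2) * dot ξ1 (ξ1 + ξ2)
    + (A / 2) * (dot p1 (ξ1 + ξ2) * dot p2 (ξ1 + ξ2) * dot ξ1 ξ2
      + dot p1 (ξ1 + ξ2) * dot ξ2 (ξ1 + ξ2) * dot ξ1 p2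
      + dot ξ1 (ξ1 + ξ2) * dot p2 (ξ1 + ξ2) * dot p1 ξ2
      + dot ξ1 (ξ1 + ξ2) * dot ξ2 (ξ1 + ξ2) * dot p1 p2)
    + B * (dot p1 p2 * dot ξ1 ξ2 + dot p1 ξ2 * dot ξ1 p2)
        * dot (ξ1 + ξ2) (ξ1 + ξ2)

lemma dot_comm (x y : Fin 3 → ℝ) : dot x y = dot y x := by
  simp [dot, mul_comm]

lemma dot_add_right (x y z : Fin 3 → ℝ) : dot x (y + z) = dot x y + dot x z := by
  simp [dot, mul_add, Finset.sum_add_distrib]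

/-- The P-wave output of the interaction of two S waves both polarized
perpendicular to the interaction plane. -/
theorem ss_interaction_VV (lam mu A B : ℝ) (ξ1 ξ2 ξV : Fin 3 → ℝ)
    (hVunit : dot ξV ξV = 1) (hV1 : dot ξV ξ1 = 0) (hV2 : dot ξV ξ2 = 0) :
    HSS lam mu A B ξ1 ξ2 ξV ξV =
      (lam + B) * dot ξ1 ξ2 * dot (ξ1 + ξ2) (ξ1 + ξ2)
        + (2 * mu + A / 2) * dot ξ1 (ξ1 + ξ2) * dot ξ2 (ξ1 + ξ2) := by
  have h1V : dot ξ1 ξV = 0 := by rw [dot_comm]; exact hV1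
  have h2V : dot ξ2 ξV = 0 := by rw [dot_comm]; exact hV2
  simp [HSS, dot_add_right, hV1, hV2, h1V, h2V, hVunit]
  ring
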